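/- Let D be a (possibly noncommutative) domain and n ≥ 1. The full matrix ring M_n(D) is strongly unit nil-clean if and only if D is a division ring, i.e., every nonzero element of D is a unit. -/

import Mathlib

/-- An element `x` of a ring is *strongly nil-clean* if `x = e + b` where `e` is an
idempotent, `b` is nilpotent, and `e` and `b` commute. -/
def IsStronglyNilClean {R : Type*} [Ring R] (x : R) : Prop :=
  ∃ e b : R, IsIdempotentElem e ∧ IsNilpotent b ∧ e * b = b * e ∧ x = e + b

/-- A ring `R` is *strongly unit nil-clean* if for every `x : R` there is a unit `u`
such that `u * x` is strongly nil-clean. -/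
def StronglyUnitNilClean (R : Type*) [Ring R] : Prop :=
  ∀ x : R, ∃ u : Rˣ, IsStronglyNilClean ((u : R) * x)

/-- A ring `R` is *unit-regular* if every `a : R` satisfies `a = a * u * a` for some unit `u`. -/
def UnitRegular (R : Type*) [Ring R] : Prop :=
  ∀ a : R, ∃ u : Rˣ, a = a * (u : R) * a

/-- A group is *locally finite* if every finitely generated subgroup is finite. -/
def LocallyFiniteGroup (G : Type*) [Group G] : Prop :=
  ∀ H : Subgroup G, H.FG → (H : Set G).Finite

/-- A subset `T` of a ring is *nilpotent* if there is `n ≥ 1` such that every product of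
`n` elements of `T` is zero. -/
def IsNilpotentSubset {R : Type*} [Ring R] (T : Set R) : Prop :=
  ∃ n : ℕ, 0 < n ∧ ∀ l : List R, (∀ a ∈ l, a ∈ T) → l.length = n → l.prod = 0

/-- A subset `S` of a ring is *locally nilpotent* if the non-unital subring generated by
any finite subset of `S` is nilpotent. -/
def IsLocallyNilpotentSet {R : Type*} [Ring R] (S : Set R) : Prop :=
  ∀ F : Finset R, (F : Set R) ⊆ S →
    IsNilpotentSubset ((NonUnitalSubring.closure (F : Set R) : Set R))

/-- A ring is *NI* if the set of nilpotent elements forms a two-sided ideal. -/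
def IsNIRing (R : Type*) [Ring R] : Prop :=
  ∃ I : TwoSidedIdeal R, ∀ x : R, x ∈ I ↔ IsNilpotent x

/-- A ring is *weakly 2-primal* if its set of nilpotent elements is a two-sided ideal
which is moreover locally nilpotent. -/
def Weakly2Primal (R : Type*) [Ring R] : Prop :=
  IsNIRing R ∧ IsLocallyNilpotentSet {x : R | IsNilpotent x}

set_option maxHeartbeats 1000000

open Module in
lemma exists_equiv_comp_idem {K V : Type*} [DivisionRing K] [AddCommGroup V] [Module K V]
    [FiniteDimensional K V] (f : V →ₗ[K] V) :
    ∃ g : V ≃ₗ[K] V, ∀ v, f (g (f (g v))) = f (g v) := by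
  obtain ⟨W, hW⟩ := (LinearMap.ker f).exists_isCompl
  obtain ⟨q, hq⟩ := (LinearMap.range f).exists_isCompl
  have hrank : finrank K q = finrank K (LinearMap.ker f) := by
    have h1 := Submodule.finrank_add_eq_of_isCompl hq
    have h2 := LinearMap.finrank_range_add_finrank_ker f
    omega
  obtain ⟨e₂⟩ := FiniteDimensional.nonempty_linearEquiv_of_finrank_eq hrank
  set gW : W →ₗ[K] V := f.domRestrict W with hgW
  have hinj : Function.Injective gW := by
    rw [← LinearMap.ker_eq_bot, LinearMap.ker_eq_bot']
    rintro ⟨w, hw⟩ h0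
    have : w ∈ LinearMap.ker f ⊓ W := ⟨by simpa [hgW] using h0, hw⟩
    rw [hW.inf_eq_bot] at this
    simpa using this
  have hrange : LinearMap.range gW = LinearMap.range f := by
    apply le_antisymm
    · rintro _ ⟨w, rfl⟩; exact ⟨w, rfl⟩
    · rintro _ ⟨v, rfl⟩
      obtain ⟨x, hx, y, hy, rfl⟩ : ∃ x ∈ LinearMap.ker f, ∃ y ∈ W, x + y = v := by
        have : v ∈ LinearMap.ker f ⊔ W := by rw [hW.sup_eq_top]; trivial
        exact Submodule.mem_sup.mp this
      refine ⟨⟨y, hy⟩, ?_⟩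
      simp [hgW, LinearMap.mem_ker.mp hx]
  let g₁ : W ≃ₗ[K] LinearMap.range f :=
    (LinearEquiv.ofInjective gW hinj).trans (LinearEquiv.ofEq _ _ hrange)
  have hg₁ : ∀ w : W, (g₁ w : V) = f w := fun w => rfl
  let gA : V ≃ₗ[K] (LinearMap.range f × q) := (Submodule.prodEquivOfIsCompl _ _ hq).symm
  let gB : (LinearMap.range f × q) ≃ₗ[K] (W × LinearMap.ker f) := g₁.symm.prodCongr e₂
  let gC : (W × LinearMap.ker f) ≃ₗ[K] V := Submodule.prodEquivOfIsCompl _ _ hW.symm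
  let g : V ≃ₗ[K] V := gA.trans (gB.trans gC)
  have key : ∀ r, r ∈ LinearMap.range f → f (g r) = r := by
    intro r hr
    have h1 : g r = (g₁.symm ⟨r, hr⟩ : V) := by
      show gC (gB (gA r)) = _
      have : gA r = ((⟨r, hr⟩ : LinearMap.range f), (0 : q)) :=
        Submodule.prodEquivOfIsCompl_symm_apply_left _ _ hq (⟨r, hr⟩ : LinearMap.range f)
      rw [this]
      simp [gB, gC]
    rw [h1]
    have := hg₁ (g₁.symm ⟨r, hr⟩)
    rw [g₁.apply_symm_apply] at this
    exact this ▸ rfl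
  exact ⟨g, fun v => key _ (LinearMap.mem_range_self f (g v))⟩


lemma sunc_matrix_of_divisionRing {K : Type*} [DivisionRing K] (n : ℕ) :
    StronglyUnitNilClean (Matrix (Fin n) (Fin n) K) := by
  intro A
  set Φ : Matrix (Fin n) (Fin n) K ≃ₗ[Kᵐᵒᵖ] ((Fin n → K) →ₗ[K] Fin n → K) :=
    Matrix.toLinearMapRight' with hΦ
  obtain ⟨g, key⟩ := exists_equiv_comp_idem (Φ A)
  refine ⟨⟨Φ.symm g.toLinearMap, Φ.symm g.symm.toLinearMap, ?_, ?_⟩, ?_⟩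
  · apply Φ.injective
    rw [show ⇑Φ = ⇑(Matrix.toLinearMapRight' (R := K) (m := Fin n) (n := Fin n)) from rfl]
    rw [Matrix.toLinearMapRight'_mul]
    show (Φ (Φ.symm g.symm.toLinearMap)).comp (Φ (Φ.symm g.toLinearMap)) = Φ 1
    rw [Φ.apply_symm_apply, Φ.apply_symm_apply,
      show Φ 1 = Matrix.toLinearMapRight' (1 : Matrix (Fin n) (Fin n) K) from rfl,
      Matrix.toLinearMapRight'_one]
    exact LinearMap.ext fun v => g.symm_apply_apply v
  · apply Φ.injective
    rw [show ⇑Φ = ⇑(Matrix.toLinearMapRight' (R := K) (m := Fin n) (n := Fin n)) from rfl]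
    rw [Matrix.toLinearMapRight'_mul]
    show (Φ (Φ.symm g.toLinearMap)).comp (Φ (Φ.symm g.symm.toLinearMap)) = Φ 1
    rw [Φ.apply_symm_apply, Φ.apply_symm_apply,
      show Φ 1 = Matrix.toLinearMapRight' (1 : Matrix (Fin n) (Fin n) K) from rfl,
      Matrix.toLinearMapRight'_one]
    exact LinearMap.ext fun v => g.apply_symm_apply v
  · refine ⟨_, 0, ?_, IsNilpotent.zero, by simp, (add_zero _).symm⟩
    have hmul : ∀ M N : Matrix (Fin n) (Fin n) K, Φ (M * N) = (Φ N).comp (Φ M) :=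
      fun M N => Matrix.toLinearMapRight'_mul M N
    show _ * _ = _
    apply Φ.injective
    rw [hmul, hmul, Φ.apply_symm_apply]
    exact LinearMap.ext fun v => key v

open Matrix in
lemma forward_aux (D : Type*) [Ring D] [IsDomain D] (n : ℕ) (hn : 1 ≤ n)
    (h : StronglyUnitNilClean (Matrix (Fin n) (Fin n) D)) :
    ∀ x : D, x ≠ 0 → IsUnit x := by
  intro x hx
  set X : Matrix (Fin n) (Fin n) D := Matrix.diagonal (fun _ => x) with hXdef
  obtain ⟨U, e, b, he, hb, hcomm, hX⟩ := h X
  -- injectivity of (e + b) acting by mulVec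
  have hinj : ∀ v : Fin n → D, (e + b) *ᵥ v = 0 → v = 0 := by
    intro v hv
    rw [← hX] at hv
    change (U.val * X) *ᵥ v = 0 at hv
    have hXv : X *ᵥ v = 0 := by
      have : (U⁻¹).val *ᵥ ((U.val * X) *ᵥ v) = 0 := by
        rw [hv, Matrix.mulVec_zero]
      rwa [Matrix.mulVec_mulVec, ← mul_assoc, Units.inv_mul, one_mul] at this
    funext i
    have : x * v i = 0 := by
      have := congrFun hXv i
      rwa [hXdef, Matrix.mulVec_diagonal] at this
    rcases mul_eq_zero.mp this with h' | h'
    · exact absurd h' hx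
    · exact h'
  -- e = 1
  have he1 : e = 1 := by
    by_contra hne
    have hne' : (1 : Matrix (Fin n) (Fin n) D) - e ≠ 0 := fun h0 => hne (by
      have := sub_eq_zero.mp h0; exact this.symm)
    obtain ⟨i, j, hij⟩ : ∃ i j, ((1 : Matrix (Fin n) (Fin n) D) - e) i j ≠ 0 := by
      by_contra hall
      push_neg at hall
      exact hne' (by ext i j; exact hall i j)
    set w₀ : Fin n → D := ((1 : Matrix (Fin n) (Fin n) D) - e) *ᵥ Pi.single j 1 with hw₀
    have hw₀ne : w₀ ≠ 0 := by
      intro h0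
      apply hij
      have := congrFun h0 i
      simpa [hw₀, Matrix.mulVec_single] using this
    have hew₀ : e *ᵥ w₀ = 0 := by
      rw [hw₀, Matrix.mulVec_mulVec]
      have : e * ((1 : Matrix (Fin n) (Fin n) D) - e) = 0 := by
        rw [mul_sub, mul_one, he.eq, sub_self]
      rw [this, Matrix.zero_mulVec]
    obtain ⟨m, hm⟩ := hb
    have hPm : b ^ m *ᵥ w₀ = 0 := by rw [hm, Matrix.zero_mulVec]
    classical
    have hex : ∃ k, b ^ k *ᵥ w₀ = 0 := ⟨m, hPm⟩
    set k := Nat.find hex with hk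
    have hk0 : k ≠ 0 := by
      intro h0
      have := Nat.find_spec hex
      rw [← hk, h0, pow_zero, Matrix.one_mulVec] at this
      exact hw₀ne this
    set w : Fin n → D := b ^ (k - 1) *ᵥ w₀ with hwdef
    have hwne : w ≠ 0 := Nat.find_min hex (Nat.sub_lt (Nat.pos_of_ne_zero hk0) one_pos)
    have hbw : b *ᵥ w = 0 := by
      rw [hwdef, Matrix.mulVec_mulVec, ← pow_succ', Nat.sub_add_cancel (Nat.pos_of_ne_zero hk0)]
      exact Nat.find_spec hex
    have hc : Commute e b := hcomm
    have hew : e *ᵥ w = 0 := by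
      rw [hwdef, Matrix.mulVec_mulVec, (hc.pow_right (k - 1)).eq,
        ← Matrix.mulVec_mulVec, hew₀, Matrix.mulVec_zero]
    have : (e + b) *ᵥ w = 0 := by
      rw [Matrix.add_mulVec, hbw, hew, add_zero]
    exact hwne (hinj w this)
  -- conclude
  rw [he1] at hX
  have hunit : IsUnit (U.val * X) := by
    rw [hX]; exact hb.isUnit_one_add
  have hXunit : IsUnit X := by
    have hXeq : X = (U⁻¹).val * (U.val * X) := by
      rw [← mul_assoc, Units.inv_mul, one_mul]
    rw [hXeq]
    exact (Units.isUnit U⁻¹).mul hunit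
  obtain ⟨Xu, hXu⟩ := hXunit
  have hone : (Xu⁻¹).val * X = 1 := by
    rw [← hXu, Units.inv_mul]
  set i : Fin n := ⟨0, hn⟩
  have hyx : (Xu⁻¹).val i i * x = 1 := by
    have := congrFun (congrFun hone i) i
    rwa [hXdef, Matrix.mul_diagonal, Matrix.one_apply_eq] at this
  set y := (Xu⁻¹).val i i
  have hxy : x * y = 1 := by
    have h1 : x * y * x = 1 * x := by rw [mul_assoc, hyx, mul_one, one_mul]
    exact mul_right_cancel₀ hx h1
  exact ⟨⟨x, y, hxy, hyx⟩, rfl⟩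

theorem matrix_stronglyUnitNilClean_iff_divisionRing
    (D : Type*) [Ring D] [IsDomain D] (n : ℕ) (hn : 1 ≤ n) :
    StronglyUnitNilClean (Matrix (Fin n) (Fin n) D) ↔ ∀ x : D, x ≠ 0 → IsUnit x := by
  constructor
  · exact fun h => forward_aux D n hn h
  · intro h
    letI : DivisionRing D := DivisionRing.ofIsUnitOrEqZero (fun a => by
      by_cases ha : a = 0
      · exact Or.inr ha
      · exact Or.inl (h a ha))
    exact sunc_matrix_of_divisionRing n
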